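/- Let G be an Abelian group and K a linearly ordered positive semifield such that for every y ≥ 1 there exists x ≥ 0 with y = x + 1. Then a function f : K → G is modular (f(x+y) + f(xy) = f(x) + f(y)) if and only if f is constant on the set of positive elements {x ∈ K : x > 0}. -/

import Mathlib

/-- Let `G` be an Abelian group and `K` a linearly ordered positive semifield (all
elements are `≥ 0`) such that every `y ≥ 1` can be written as `x + 1` with `x ≥ 0`.
Then `f : K → G` is modular iff `f` is constant on the set of positive elements. -/
theorem semifield_modular_iff_constant_on_pos
    {G K : Type*} [AddCommGroup G] [Semifield K] [LinearOrder K] [IsStrictOrderedRing K]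
    (hpos : ∀ x : K, 0 ≤ x)
    (hsucc : ∀ y : K, 1 ≤ y → ∃ x : K, 0 ≤ x ∧ y = x + 1)
    (f : K → G) :
    (∀ x y : K, f (x + y) + f (x * y) = f x + f y) ↔
      (∀ x y : K, 0 < x → 0 < y → f x = f y) := by
  constructor
  · intro hm
    -- first: f (x+1) = f 1 for all x
    have h1 : ∀ x : K, f (x + 1) = f 1 := by
      intro x
      have := hm x 1
      rw [mul_one] at this
      rw [add_comm (f x)] at this
      exact add_right_cancel this
    have hge : ∀ y : K, 1 ≤ y → f y = f 1 := by
      intro y hy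
      obtain ⟨x, _, rfl⟩ := hsucc y hy
      exact h1 x
    have key : ∀ y : K, 0 < y → f y = f 1 := by
      intro y hy
      rcases le_or_gt 1 y with h | h
      · exact hge y h
      · have hyi : 1 ≤ y⁻¹ := one_le_inv_iff₀.mpr ⟨hy, h.le⟩
        have hsum : 1 ≤ y⁻¹ + y := le_add_of_le_of_nonneg hyi (hpos y)
        have := hm y⁻¹ y
        rw [inv_mul_cancel₀ hy.ne', hge _ hsum, hge _ hyi] at this
        exact (add_left_cancel this).symm
    intro x y hx hy
    rw [key x hx, key y hy]
  · intro hc x y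
    rcases eq_or_lt_of_le (hpos x) with hx | hx
    · rw [← hx, zero_add, zero_mul]; abel
    rcases eq_or_lt_of_le (hpos y) with hy | hy
    · rw [← hy, add_zero, mul_zero]
    have hxy : 0 < x + y := add_pos hx hy
    have hxym : 0 < x * y := mul_pos hx hy
    rw [hc _ _ hxy hx, hc _ _ hxym hy]
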